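/- Let b₁, b₂, b₃ > 0, let n ∈ ℝ³ with ‖n‖ = 1, and let K ∈ ℝ^{3×3} satisfy K n = 0. If c ∈ ℝ³ is a critical point (vanishing gradient) of the function c ↦ b₁‖sym(K + c ⊗ n)‖² + b₂‖skew(K + c ⊗ n)‖² + b₃ (tr(K + c ⊗ n))², then c satisfies the Euler–Lagrange equation [ (b₁+b₂)(𝟙₃ − n ⊗ n) + 2(b₁+b₃) n ⊗ n ] c = (b₂ − b₁) Kᵀn − 2 b₃ tr(K) n. -/

import Mathlib

open Matrix

noncomputable section

/-- Symmetric part of a matrix. -/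
def msym {n : ℕ} (X : Matrix (Fin n) (Fin n) ℝ) : Matrix (Fin n) (Fin n) ℝ :=
  (1 / 2 : ℝ) • (X + Xᵀ)

/-- Skew-symmetric part of a matrix. -/
def mskew {n : ℕ} (X : Matrix (Fin n) (Fin n) ℝ) : Matrix (Fin n) (Fin n) ℝ :=
  (1 / 2 : ℝ) • (X - Xᵀ)

/-- Squared Frobenius norm `‖X‖² = tr(XᵀX)`. -/
def mnormSq {n : ℕ} (X : Matrix (Fin n) (Fin n) ℝ) : ℝ :=
  Matrix.trace (Xᵀ * X)

theorem stmt_16 (b₁ b₂ b₃ : ℝ) (hb₁ : 0 < b₁) (hb₂ : 0 < b₂) (hb₃ : 0 < b₃)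
    (n : Fin 3 → ℝ) (hn : ∑ i, (n i) ^ 2 = 1)
    (K : Matrix (Fin 3) (Fin 3) ℝ) (hK : K.mulVec n = 0)
    (c : Fin 3 → ℝ)
    (hcrit : fderiv ℝ (fun c : Fin 3 → ℝ =>
        b₁ * mnormSq (msym (K + vecMulVec c n))
          + b₂ * mnormSq (mskew (K + vecMulVec c n))
          + b₃ * (Matrix.trace (K + vecMulVec c n)) ^ 2) c = 0) :
    ((b₁ + b₂) • ((1 : Matrix (Fin 3) (Fin 3) ℝ) - vecMulVec n n)
        + (2 * (b₁ + b₃)) • vecMulVec n n).mulVec c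
      = (b₂ - b₁) • Kᵀ.mulVec n - (2 * b₃ * Matrix.trace K) • n := by
  classical
  set f : (Fin 3 → ℝ) → ℝ := fun c : Fin 3 → ℝ =>
        b₁ * mnormSq (msym (K + vecMulVec c n))
          + b₂ * mnormSq (mskew (K + vecMulVec c n))
          + b₃ * (Matrix.trace (K + vecMulVec c n)) ^ 2 with hfdef
  have hfe : ∀ x : Fin 3 → ℝ, f x =
      b₁ * (∑ i, ∑ j, ((1/2 : ℝ) * ((K i j + x i * n j) + (K j i + x j * n i)))^2)
      + b₂ * (∑ i, ∑ j, ((1/2 : ℝ) * ((K i j + x i * n j) - (K j i + x j * n i)))^2)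
      + b₃ * (∑ i, (K i i + x i * n i))^2 := by
    intro x
    simp only [hfdef, mnormSq, msym, mskew, Matrix.trace, Matrix.mul_apply,
      Matrix.diag, Matrix.vecMulVec_apply, Matrix.add_apply, Matrix.sub_apply,
      Matrix.transpose_apply, Matrix.smul_apply, smul_eq_mul, Fin.sum_univ_three]
    ring
  have hdiff : DifferentiableAt ℝ f c := by
    rw [funext hfe]
    fun_prop
  have hdir : ∀ v : Fin 3 → ℝ,
      (∑ i, v i * ((b₁+b₂) * (∑ j, (K i j + c i * n j) * n j)
        + (b₁ - b₂) * (∑ j, (K j i + c j * n i) * n j)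
        + 2*b₃*(∑ j, (K j j + c j * n j)) * n i)) = 0 := by
    intro v
    set D : ℝ := ∑ i, v i * ((b₁+b₂) * (∑ j, (K i j + c i * n j) * n j)
        + (b₁ - b₂) * (∑ j, (K j i + c j * n i) * n j)
        + 2*b₃*(∑ j, (K j j + c j * n j)) * n i) with hDdef
    set E : ℝ := b₁ * (∑ i, ∑ j, ((1/2 : ℝ) * (v i * n j + v j * n i))^2)
        + b₂ * (∑ i, ∑ j, ((1/2 : ℝ) * (v i * n j - v j * n i))^2)
        + b₃ * (∑ i, v i * n i)^2 with hEdef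
    have hline : HasDerivAt (fun t : ℝ => c + t • v) v 0 := by
      simpa using ((hasDerivAt_id (0:ℝ)).smul_const v).const_add c
    have h1 : HasDerivAt (fun t : ℝ => f (c + t • v)) (fderiv ℝ f c v) 0 := by
      have h0 : c + (0:ℝ) • v = c := by simp
      have := (h0 ▸ hdiff).hasFDerivAt.comp_hasDerivAt 0 hline
      rw [h0] at this
      exact this
    have h2 : HasDerivAt (fun t : ℝ => f (c + t • v)) D 0 := by
      have heq : (fun t : ℝ => f (c + t • v)) = fun t : ℝ => f c + D * t + E * t^2 := by
        funext t
        rw [hfe, hfe]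
        simp only [hDdef, hEdef, Pi.add_apply, Pi.smul_apply, smul_eq_mul,
          Fin.sum_univ_three]
        ring
      rw [heq]
      have hD1 : HasDerivAt (fun t : ℝ => D * t) D 0 := by
        simpa using (hasDerivAt_id (0:ℝ)).const_mul D
      have hE1 : HasDerivAt (fun t : ℝ => E * t^2) 0 0 := by
        simpa using (hasDerivAt_pow 2 (0:ℝ)).const_mul E
      have h3 := ((hasDerivAt_const (0:ℝ) (f c)).add hD1).add hE1
      simp only [zero_add, add_zero] at h3
      exact h3
    have hu := h1.unique h2
    rw [hcrit] at hu
    simpa using hu.symm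
  have hK0 : ∀ i, ∑ j, K i j * n j = 0 := by
    intro i
    have := congrFun hK i
    simpa [Matrix.mulVec, dotProduct] using this
  have e0 := hdir ![1,0,0]
  have e1 := hdir ![0,1,0]
  have e2 := hdir ![0,0,1]
  simp only [Fin.sum_univ_three, Matrix.cons_val_zero, Matrix.cons_val_one,
    Matrix.head_cons, Matrix.cons_val_two, Matrix.tail_cons, one_mul, zero_mul,
    add_zero, zero_add] at e0 e1 e2
  have hn' := hn
  have hK0' := hK0 0
  have hK1' := hK0 1
  have hK2' := hK0 2
  simp only [Fin.sum_univ_three] at hn' hK0' hK1' hK2'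
  funext i
  fin_cases i <;>
    simp only [Matrix.mulVec, dotProduct, Matrix.add_apply, Matrix.sub_apply,
      Matrix.smul_apply, Matrix.one_apply, Matrix.vecMulVec_apply, Matrix.transpose_apply,
      Pi.smul_apply, Pi.sub_apply, smul_eq_mul, Matrix.trace, Matrix.diag,
      Fin.sum_univ_three, Fin.reduceFinMk, Fin.reduceEq, if_true, if_false, ite_true, ite_false, Fin.mk_zero, Fin.mk_one,
      Matrix.cons_val_zero, Matrix.cons_val_one, Matrix.head_cons] <;>
    [linear_combination e0 - (b₁+b₂) * c 0 * hn' - (b₁+b₂) * hK0';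
     linear_combination e1 - (b₁+b₂) * c 1 * hn' - (b₁+b₂) * hK1';
     linear_combination e2 - (b₁+b₂) * c 2 * hn' - (b₁+b₂) * hK2']
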